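/- If G is a connected cubic graph of order n that has a spanning 2-factor consisting of triangles, then F_t(G) = n/2 if and only if G is isomorphic to the prism C_3 □ K_2. -/

import Mathlib

/-- A set `T` of (colored) vertices is closed under the forcing rule: whenever a colored
vertex `v ∈ T` has the property that all of its neighbors outside `T` are equal to `w`
(i.e. `w` is its unique non-colored neighbor, if `w ∉ T`), then `w ∈ T`. -/
def ForcingClosed {V : Type*} (G : SimpleGraph V) (T : Set V) : Prop :=
  ∀ v ∈ T, ∀ w, G.Adj v w → (∀ u, G.Adj v u → u ∉ T → u = w) → w ∈ T

/-- `S` is a (zero) forcing set of `G`: iterating the forcing process starting from `S`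
colors all vertices; equivalently, every forcing-closed superset of `S` is everything. -/
def IsForcingSet {V : Type*} (G : SimpleGraph V) (S : Set V) : Prop :=
  ∀ T : Set V, S ⊆ T → ForcingClosed G T → ∀ v, v ∈ T

/-- `S` is a total forcing set of `G`: a forcing set whose induced subgraph has no
isolated vertex. -/
def IsTotalForcingSet {V : Type*} (G : SimpleGraph V) (S : Set V) : Prop :=
  IsForcingSet G S ∧ ∀ v ∈ S, ∃ w ∈ S, G.Adj v w

/-- The forcing number `F(G)`: minimum cardinality of a forcing set. -/
noncomputable def forcingNumber {V : Type*} (G : SimpleGraph V) : ℕ :=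
  sInf {n : ℕ | ∃ S : Set V, IsForcingSet G S ∧ S.ncard = n}

/-- The total forcing number `F_t(G)`: minimum cardinality of a total forcing set. -/
noncomputable def totalForcingNumber {V : Type*} (G : SimpleGraph V) : ℕ :=
  sInf {n : ℕ | ∃ S : Set V, IsTotalForcingSet G S ∧ S.ncard = n}

/-- `G` is cubic (3-regular): every vertex has exactly 3 neighbors. -/
def IsCubic {V : Type*} (G : SimpleGraph V) : Prop := ∀ v, (G.neighborSet v).ncard = 3

/-- `G` has a spanning 2-factor consisting of triangles: a spanning 2-regular subgraph
each of whose components is a triangle (equivalently, a 2-regular spanning subgraph in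
which every vertex lies in a triangle). -/
def HasTriangleTwoFactor {V : Type*} (G : SimpleGraph V) : Prop :=
  ∃ H : SimpleGraph V, H ≤ G ∧ (∀ v, (H.neighborSet v).ncard = 2) ∧
    ∀ v, ∃ a b, H.Adj v a ∧ H.Adj v b ∧ H.Adj a b

/-- The prism `C₃ □ K₂`, the Cartesian (box) product of a 3-cycle with `K₂`. -/
def prism : SimpleGraph (Fin 3 × Fin 2) :=
  (SimpleGraph.cycleGraph 3).boxProd (⊤ : SimpleGraph (Fin 2))

section aux
variable {V : Type*} [Fintype V] {G : SimpleGraph V}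

lemma walk_mem {K : Set V} (hcl : ∀ v ∈ K, ∀ w, G.Adj v w → w ∈ K) :
    ∀ {a b : V}, G.Walk a b → a ∈ K → b ∈ K := by
  intro a b W
  induction W with
  | nil => exact id
  | cons h _ ih => exact fun ha => ih (hcl _ ha _ h)

lemma reach_all (hconn : G.Connected) {K : Set V} {a : V} (ha : a ∈ K)
    (hcl : ∀ v ∈ K, ∀ w, G.Adj v w → w ∈ K) (v : V) : v ∈ K := by
  obtain ⟨W⟩ := hconn a v
  exact walk_mem hcl W ha

lemma setup (G H : SimpleGraph V) (hle : H ≤ G) (hcubic : IsCubic G)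
    (h2 : ∀ v, (H.neighborSet v).ncard = 2)
    (ht : ∀ v, ∃ a b, H.Adj v a ∧ H.Adj v b ∧ H.Adj a b) :
    ∃ c1 c2 p : V → V,
      (∀ v, G.neighborSet v = {c1 v, c2 v, p v}) ∧
      (∀ v, v ≠ c1 v ∧ v ≠ c2 v ∧ c1 v ≠ c2 v) ∧
      (∀ v u, u ∈ ({v, c1 v, c2 v} : Set V) → ({u, c1 u, c2 u} : Set V) = {v, c1 v, c2 v}) ∧
      (∀ v, p (p v) = v) ∧
      (∀ v, p v ∉ ({v, c1 v, c2 v} : Set V)) := by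
  choose c1 c2 hA1 hA2 hA12 using ht
  have hne12 : ∀ v, c1 v ≠ c2 v := fun v => (hA12 v).ne
  have hnbrH : ∀ v, H.neighborSet v = {c1 v, c2 v} := by
    intro v
    refine (Set.eq_of_subset_of_ncard_le ?_ ?_ (Set.toFinite _)).symm
    · rintro u (rfl | rfl)
      · exact hA1 v
      · exact hA2 v
    · rw [h2, Set.ncard_pair (hne12 v)]
  have hnbrH' : ∀ v a b, H.Adj v a → H.Adj v b → a ≠ b → H.neighborSet v = {a, b} := by
    intro v a b ha hb hab
    refine (Set.eq_of_subset_of_ncard_le ?_ ?_ (Set.toFinite _)).symm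
    · rintro u (rfl | rfl) <;> assumption
    · rw [h2, Set.ncard_pair hab]
  -- mate coherence
  have hmem : ∀ v u, u ∈ ({v, c1 v, c2 v} : Set V) →
      ({u, c1 u, c2 u} : Set V) = {v, c1 v, c2 v} := by
    intro v u hu
    have key : ∀ w, (insert w (H.neighborSet w) : Set V) = {w, c1 w, c2 w} := by
      intro w; rw [hnbrH]
    rcases hu with rfl | rfl | rfl
    · rfl
    · rw [← key, hnbrH' (c1 v) v (c2 v) (hA1 v).symm (hA12 v) (hA2 v).ne]
      ext x; simp; tauto
    · rw [← key, hnbrH' (c2 v) v (c1 v) (hA2 v).symm (hA12 v).symm (hA1 v).ne]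
      ext x; simp; tauto
  -- the matching function p
  have hsubG : ∀ v, ({c1 v, c2 v} : Set V) ⊆ G.neighborSet v := by
    rintro v u (rfl | rfl)
    · exact hle (hA1 v)
    · exact hle (hA2 v)
  have hdiff : ∀ v, (G.neighborSet v \ {c1 v, c2 v}).ncard = 1 := by
    intro v
    rw [Set.ncard_diff (hsubG v) (Set.toFinite _), hcubic v, Set.ncard_pair (hne12 v)]
  choose p hp using fun v => Set.ncard_eq_one.mp (hdiff v)
  have hpmem : ∀ v, p v ∈ G.neighborSet v \ ({c1 v, c2 v} : Set V) := by
    intro v; rw [hp v]; exact rfl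
  have hpadj : ∀ v, G.Adj v (p v) := fun v => (hpmem v).1
  have hGnbr : ∀ v, G.neighborSet v = {c1 v, c2 v, p v} := by
    intro v
    ext u
    constructor
    · intro hu
      by_cases hc : u ∈ ({c1 v, c2 v} : Set V)
      · rcases hc with rfl | rfl
        · exact Or.inl rfl
        · exact Or.inr (Or.inl rfl)
      · have : u ∈ G.neighborSet v \ ({c1 v, c2 v} : Set V) := ⟨hu, hc⟩
        rw [hp v] at this
        exact Or.inr (Or.inr this)
    · rintro (rfl | rfl | rfl)
      · exact hle (hA1 v)
      · exact hle (hA2 v)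
      · exact hpadj v
  have hptri : ∀ v, p v ∉ ({v, c1 v, c2 v} : Set V) := by
    intro v hmem'
    rcases hmem' with h | h
    · exact (hpadj v).ne' h
    · exact (hpmem v).2 h
  have hpp : ∀ v, p (p v) = v := by
    intro v
    have h1 : v ∈ G.neighborSet (p v) := (hpadj v).symm
    have h2' : v ∉ ({c1 (p v), c2 (p v)} : Set V) := by
      intro hv
      have : H.Adj (p v) v := by
        rcases hv with hv | hv
        · have h3 := hA1 (p v); rw [← hv] at h3; exact h3
        · have h3 := hA2 (p v); rw [← hv] at h3; exact h3
      have : p v ∈ H.neighborSet v := this.symm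
      rw [hnbrH] at this
      exact (hpmem v).2 this
    have : v ∈ G.neighborSet (p v) \ ({c1 (p v), c2 (p v)} : Set V) := ⟨h1, h2'⟩
    rw [hp (p v)] at this
    exact this.symm
  exact ⟨c1, c2, p, hGnbr, fun v => ⟨(hle (hA1 v)).ne, (hle (hA2 v)).ne, hne12 v⟩, hmem, hpp, hptri⟩

lemma exists_iota (tri : V → Set V) (hself : ∀ v, v ∈ tri v)
    (hmem : ∀ v u, u ∈ tri v → tri u = tri v) :
    ∃ ι : V → ℕ, (∀ u v, ι u = ι v ↔ tri u = tri v) ∧ (∀ v, ι v < Fintype.card V) := by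
  classical
  set eV := Fintype.equivFin V with heV
  set Fs : V → Finset ℕ := fun v => (tri v).toFinset.image fun w => (eV w : ℕ) with hFs
  have hne : ∀ v, (Fs v).Nonempty :=
    fun v => ⟨eV v, Finset.mem_image.2 ⟨v, Set.mem_toFinset.2 (hself v), rfl⟩⟩
  have hFinv : ∀ u v, tri u = tri v → Fs u = Fs v := by
    intro u v h; rw [hFs]; simp only [h]
  refine ⟨fun v => (Fs v).min' (hne v), ?_, ?_⟩
  · intro u v
    constructor
    · intro h
      obtain ⟨x, hx, hx2⟩ := Finset.mem_image.1 (Finset.min'_mem (Fs u) (hne u))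
      obtain ⟨y, hy, hy2⟩ := Finset.mem_image.1 (Finset.min'_mem (Fs v) (hne v))
      have hxy : x = y := by
        apply eV.injective
        apply Fin.ext
        rw [hx2, hy2]
        exact h
      have h1 := hmem u x (Set.mem_toFinset.1 hx)
      have h2 := hmem v y (Set.mem_toFinset.1 hy)
      rw [← h1, hxy, h2]
    · intro h
      have hEq := hFinv u v h
      exact le_antisymm
        (Finset.min'_le _ _ (by rw [hEq]; exact Finset.min'_mem _ _))
        (Finset.min'_le _ _ (by rw [← hEq]; exact Finset.min'_mem _ _))
  · intro v
    calc (Fs v).min' (hne v) ≤ (eV v : ℕ) :=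
          Finset.min'_le _ _ (Finset.mem_image.2 ⟨v, Set.mem_toFinset.2 (hself v), rfl⟩)
      _ < Fintype.card V := (eV v).isLt

lemma exists_rho (hconn : G.Connected) (c1 c2 p : V → V) (tri : V → Set V)
    (htri : ∀ v, tri v = {v, c1 v, c2 v})
    (hN : ∀ v, G.neighborSet v = {c1 v, c2 v, p v})
    (hmem : ∀ v u, u ∈ tri v → tri u = tri v)
    (hpp : ∀ v, p (p v) = v)
    (a0 : V) (hne : tri a0 ≠ tri (p a0)) :
    ∃ ρ : V → ℕ,
      (∀ u v, ρ u = ρ v ↔ tri u = tri v) ∧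
      (∀ v, ρ v = 0 ↔ tri v = tri a0) ∧
      (∀ v, ρ v = 1 ↔ tri v = tri (p a0)) ∧
      (∀ v, 2 ≤ ρ v → ∃ w ∈ tri v, ρ (p w) < ρ w) := by
  classical
  have hself : ∀ v, v ∈ tri v := fun v => by rw [htri]; exact Or.inl rfl
  set n := Fintype.card V with hn
  obtain ⟨ι, hι, hιlt⟩ := exists_iota tri hself hmem
  -- the BFS layers
  let U : ℕ → Set V := fun k =>
    Nat.rec (tri a0 ∪ tri (p a0)) (fun _ Uk => Uk ∪ {v | ∃ w ∈ tri v, p w ∈ Uk}) k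
  have hU0 : U 0 = tri a0 ∪ tri (p a0) := rfl
  have hUs : ∀ k, U (k+1) = U k ∪ {v | ∃ w ∈ tri v, p w ∈ U k} := fun _ => rfl
  have htriclosed : ∀ k v, v ∈ U k → tri v ⊆ U k := by
    intro k
    induction k with
    | zero =>
      intro v hv u hu
      rcases hv with hv | hv
      · exact Or.inl ((hmem a0 v hv) ▸ hu)
      · exact Or.inr ((hmem (p a0) v hv) ▸ hu)
    | succ k ih =>
      intro v hv u hu
      rcases hv with hv | hv
      · exact Or.inl (ih v hv hu)
      · exact Or.inr (by rw [Set.mem_setOf_eq, hmem v u hu]; exact hv)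
  have hcover : ∀ v, ∃ k, v ∈ U k := by
    intro v
    refine reach_all hconn (K := {v | ∃ k, v ∈ U k}) ⟨0, Or.inl (hself a0)⟩ ?_ v
    rintro x ⟨k, hk⟩ w hadj
    have hw : w ∈ ({c1 x, c2 x, p x} : Set V) := by
      rw [← hN]; exact hadj
    have hc1 : c1 x ∈ tri x := by rw [htri]; exact Or.inr (Or.inl rfl)
    have hc2 : c2 x ∈ tri x := by rw [htri]; exact Or.inr (Or.inr rfl)
    rcases hw with rfl | rfl | rfl
    · exact ⟨k, htriclosed k x hk hc1⟩
    · exact ⟨k, htriclosed k x hk hc2⟩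
    · exact ⟨k + 1, Or.inr ⟨p x, hself (p x), by rw [hpp]; exact hk⟩⟩
  let lvl : V → ℕ := fun v => sInf {k | v ∈ U k}
  have hspec : ∀ v, v ∈ U (lvl v) := fun v => Nat.sInf_mem (hcover v)
  have hle : ∀ v k, v ∈ U k → lvl v ≤ k := fun v k h => Nat.sInf_le h
  have hmin : ∀ v k, k < lvl v → v ∉ U k := fun v k h => Nat.notMem_of_lt_sInf h
  have hlvl_inv : ∀ u v, tri u = tri v → lvl u = lvl v := by
    have h1 : ∀ a b : V, tri a = tri b → lvl a ≤ lvl b := by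
      intro a b hab
      exact hle a _ (htriclosed _ b (hspec b) (by rw [← hab]; exact hself a))
    exact fun u v h => le_antisymm (h1 u v h) (h1 v u h.symm)
  have hroot0 : ∀ v, lvl v = 0 ↔ (tri v = tri a0 ∨ tri v = tri (p a0)) := by
    intro v
    rw [show (lvl v = 0) ↔ v ∈ U 0 by
      constructor
      · intro h
        rcases Nat.sInf_eq_zero.1 h with h0 | h0
        · exact h0
        · exact absurd (hcover v) (by rw [← Set.not_nonempty_iff_eq_empty] at h0; exact h0)
      · intro h; exact Nat.sInf_eq_zero.2 (Or.inl h)]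
    constructor
    · rintro (h | h)
      · exact Or.inl (hmem a0 v h)
      · exact Or.inr (hmem (p a0) v h)
    · rintro (h | h)
      · exact Or.inl (by rw [← h]; exact hself v)
      · exact Or.inr (by rw [← h]; exact hself v)
  -- the rank function
  refine ⟨fun v => if tri v = tri a0 then 0 else if tri v = tri (p a0) then 1
    else (n+2) * lvl v + (ι v + 2), ?_, ?_, ?_, ?_⟩ <;> dsimp only
  case _ =>
    -- iff
    intro u v
    constructor
    · intro h
      by_cases hu1 : tri u = tri a0 <;> by_cases hv1 : tri v = tri a0
      · rw [hu1, hv1]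
      · rw [if_pos hu1, if_neg hv1] at h
        by_cases hv2 : tri v = tri (p a0)
        · rw [if_pos hv2] at h; omega
        · rw [if_neg hv2] at h; omega
      · rw [if_neg hu1, if_pos hv1] at h
        by_cases hu2 : tri u = tri (p a0)
        · rw [if_pos hu2] at h; omega
        · rw [if_neg hu2] at h; omega
      · rw [if_neg hu1, if_neg hv1] at h
        by_cases hu2 : tri u = tri (p a0) <;> by_cases hv2 : tri v = tri (p a0)
        · rw [hu2, hv2]
        · rw [if_pos hu2, if_neg hv2] at h; omega
        · rw [if_neg hu2, if_pos hv2] at h; omega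
        · rw [if_neg hu2, if_neg hv2] at h
          have hpos : 0 < n + 2 := by omega
          have hlvleq : lvl u = lvl v := by
            have h1 := congrArg (· / (n+2)) h
            rw [Nat.mul_add_div hpos, Nat.mul_add_div hpos,
              Nat.div_eq_of_lt (by have := hιlt u; omega),
              Nat.div_eq_of_lt (by have := hιlt v; omega)] at h1
            omega
          have hιeq : ι u = ι v := by
            have h1 := congrArg (· % (n+2)) h
            rw [Nat.mul_add_mod, Nat.mul_add_mod,
              Nat.mod_eq_of_lt (by have := hιlt u; omega),
              Nat.mod_eq_of_lt (by have := hιlt v; omega)] at h1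
            omega
          exact (hι u v).1 hιeq
    · intro h
      rw [h, hlvl_inv u v h, (hι u v).2 h]
  case _ =>
    intro v
    by_cases h1 : tri v = tri a0
    · rw [if_pos h1]; exact ⟨fun _ => h1, fun _ => rfl⟩
    · rw [if_neg h1]
      by_cases h2 : tri v = tri (p a0)
      · rw [if_pos h2]; exact ⟨fun h => by omega, fun h => absurd h h1⟩
      · rw [if_neg h2]; exact ⟨fun h => by omega, fun h => absurd h h1⟩
  case _ =>
    intro v
    by_cases h1 : tri v = tri a0
    · rw [if_pos h1]
      exact ⟨fun h => by omega, fun h2 => absurd (h1.symm.trans h2) hne⟩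
    · rw [if_neg h1]
      by_cases h2 : tri v = tri (p a0)
      · rw [if_pos h2]; exact ⟨fun _ => h2, fun _ => rfl⟩
      · rw [if_neg h2]; exact ⟨fun h => by omega, fun h => absurd h h2⟩
  case _ =>
    intro v h2le
    by_cases h1 : tri v = tri a0
    · rw [if_pos h1] at h2le; omega
    by_cases h2 : tri v = tri (p a0)
    · rw [if_neg h1, if_pos h2] at h2le; omega
    have hlvlne : lvl v ≠ 0 := by
      rw [Ne, hroot0]; tauto
    obtain ⟨k, hk⟩ := Nat.exists_eq_succ_of_ne_zero hlvlne
    have hvU : v ∈ U (k + 1) := by have hs := hspec v; rwa [hk] at hs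
    have hvnotU : v ∉ U k := hmin v k (by omega)
    rcases hvU with hvU | hvU
    · exact absurd hvU hvnotU
    obtain ⟨w, hw, hpw⟩ := hvU
    refine ⟨w, hw, ?_⟩
    have hwtri : tri w = tri v := hmem v w hw
    have hw1 : tri w ≠ tri a0 := by rw [hwtri]; exact h1
    have hw2 : tri w ≠ tri (p a0) := by rw [hwtri]; exact h2
    have hlw : lvl w = k + 1 := by rw [hlvl_inv w v hwtri, hk]
    rw [if_neg hw1, if_neg hw2, hlw]
    have hlpw : lvl (p w) ≤ k := hle (p w) k hpw
    by_cases hp1 : tri (p w) = tri a0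
    · rw [if_pos hp1]
      have : n + 2 ≤ (n+2) * (k+1) := by nlinarith
      omega
    rw [if_neg hp1]
    by_cases hp2 : tri (p w) = tri (p a0)
    · rw [if_pos hp2]
      have : n + 2 ≤ (n+2) * (k+1) := by nlinarith
      omega
    rw [if_neg hp2]
    have hb1 : (n+2) * lvl (p w) ≤ (n+2) * k := Nat.mul_le_mul_left _ hlpw
    have hb2 : ι (p w) < n := hιlt (p w)
    have hb3 : (n+2) * (k+1) = (n+2) * k + (n+2) := by ring
    omega


end aux

lemma card_ge_four {V : Type*} [Fintype V] {G : SimpleGraph V} (hcubic : IsCubic G)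
    (hne : Nonempty V) : 4 ≤ Fintype.card V := by
  obtain ⟨v⟩ := hne
  have hv : v ∉ G.neighborSet v := fun h => G.irrefl h
  have h1 : (insert v (G.neighborSet v)).ncard = 4 := by
    rw [Set.ncard_insert_of_notMem hv (Set.toFinite _), hcubic v]
  calc 4 = (insert v (G.neighborSet v)).ncard := h1.symm
    _ ≤ (Set.univ : Set V).ncard := Set.ncard_le_ncard (Set.subset_univ _) (Set.toFinite _)
    _ = Fintype.card V := by rw [Set.ncard_univ, Nat.card_eq_fintype_card]

lemma forcing_ncard_ge {V : Type*} [Fintype V] {G : SimpleGraph V} (hcubic : IsCubic G)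
    (hV : 4 ≤ Fintype.card V) {S : Set V} (hS : IsForcingSet G S) : 3 ≤ S.ncard := by
  by_contra hlt
  push_neg at hlt
  have hclosed : ForcingClosed G S := by
    intro v hv w hadj hcond
    have h1 : (G.neighborSet v ∩ S) ⊆ S \ {v} := by
      rintro u ⟨hu1, hu2⟩
      exact ⟨hu2, fun h => G.irrefl (h ▸ hu1)⟩
    have h2 : (G.neighborSet v ∩ S).ncard ≤ 1 := by
      calc (G.neighborSet v ∩ S).ncard ≤ (S \ {v}).ncard :=
            Set.ncard_le_ncard h1 (Set.toFinite _)
        _ = S.ncard - 1 := Set.ncard_diff_singleton_of_mem hv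
        _ ≤ 1 := by omega
    have hsplit := Set.ncard_inter_add_ncard_diff_eq_ncard (G.neighborSet v) S (Set.toFinite _)
    rw [hcubic v] at hsplit
    have h3 : 1 < (G.neighborSet v \ S).ncard := by omega
    obtain ⟨x, y, hx, hy, hxy⟩ := (Set.one_lt_ncard_iff (Set.toFinite _)).1 h3
    have hxw := hcond x hx.1 hx.2
    have hyw := hcond y hy.1 hy.2
    exact absurd (hxw.trans hyw.symm) hxy
  have hall : ∀ v, v ∈ S := hS S (subset_refl S) hclosed
  have hSuniv : Fintype.card V ≤ S.ncard := by
    have hsub : (Set.univ : Set V) ⊆ S := fun v _ => hall v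
    calc Fintype.card V = (Set.univ : Set V).ncard := by
          rw [Set.ncard_univ, Nat.card_eq_fintype_card]
      _ ≤ S.ncard := Set.ncard_le_ncard hsub (Set.toFinite _)
  omega

lemma prism_adj_iff : ∀ x y : Fin 3 × Fin 2,
    prism.Adj x y ↔ ((x.1 ≠ y.1 ∧ x.2 = y.2) ∨ (x.1 = y.1 ∧ x.2 ≠ y.2)) := by
  have hcyc : ∀ i j : Fin 3, (SimpleGraph.cycleGraph 3).Adj i j ↔ i ≠ j := by decide
  intro x y
  rw [prism, SimpleGraph.boxProd_adj, hcyc]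
  simp only [SimpleGraph.top_adj]
  tauto

theorem totalForcingNumber_eq_half_iff_prism {V : Type*} [Fintype V]
    (G : SimpleGraph V) (hconn : G.Connected) (hcubic : IsCubic G)
    (h2f : HasTriangleTwoFactor G) :
    2 * totalForcingNumber G = Fintype.card V ↔ Nonempty (G ≃g prism) := by
  classical
  obtain ⟨H, hle, h2, ht⟩ := h2f
  obtain ⟨c1, c2, p, hN, hdist, hmem0, hpp, hptri0⟩ := setup G H hle hcubic h2 ht
  set tri : V → Set V := fun v => {v, c1 v, c2 v} with htridef
  have htri : ∀ v, tri v = {v, c1 v, c2 v} := fun _ => rfl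
  have hmem : ∀ v u, u ∈ tri v → tri u = tri v := hmem0
  have hp_notin : ∀ v, p v ∉ tri v := hptri0
  have hself : ∀ v, v ∈ tri v := fun v => Or.inl rfl
  have hc1m : ∀ v, c1 v ∈ tri v := fun v => Or.inr (Or.inl rfl)
  have hc2m : ∀ v, c2 v ∈ tri v := fun v => Or.inr (Or.inr rfl)
  have hAdjIff : ∀ v w, G.Adj v w ↔ (w = c1 v ∨ w = c2 v ∨ w = p v) := by
    intro v w
    rw [← SimpleGraph.mem_neighborSet, hN v]
    simp [Set.mem_insert_iff]
  have hpadj : ∀ v, G.Adj v (p v) := fun v => (hAdjIff v (p v)).2 (Or.inr (Or.inr rfl))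
  have hadj_c1 : ∀ v, G.Adj v (c1 v) := fun v => (hAdjIff v (c1 v)).2 (Or.inl rfl)
  have hadj_c2 : ∀ v, G.Adj v (c2 v) := fun v => (hAdjIff v (c2 v)).2 (Or.inr (Or.inl rfl))
  have htri_adj : ∀ v u w, u ∈ tri v → w ∈ tri v → u ≠ w → G.Adj u w := by
    intro v u w hu hw huw
    have h1 : w ∈ tri u := by rw [hmem v u hu]; exact hw
    rcases h1 with h | h | h
    · exact absurd h.symm huw
    · rw [h]; exact hadj_c1 u
    · rw [h]; exact hadj_c2 u
  have hncard_tri : ∀ v, (tri v).ncard = 3 := by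
    intro v
    rw [htri v]
    rw [Set.ncard_insert_of_notMem (by
      intro h
      rcases h with h | h
      · exact (hdist v).1 h
      · exact (hdist v).2.1 h) (Set.toFinite _), Set.ncard_pair (hdist v).2.2]
  have htri_eq3 : ∀ v x y z, x ∈ tri v → y ∈ tri v → z ∈ tri v →
      x ≠ y → x ≠ z → y ≠ z → tri v = {x, y, z} := by
    intro v x y z hx hy hz hxy hxz hyz
    symm
    apply Set.eq_of_subset_of_ncard_le
    · rintro u (rfl | rfl | rfl) <;> assumption
    · rw [hncard_tri v]
      rw [Set.ncard_insert_of_notMem (by rintro (h | h) <;> [exact hxy h; exact hxz h])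
        (Set.toFinite _), Set.ncard_pair hyz]
    · exact Set.toFinite _
  have hpinj : Function.Injective p := fun a b h => by rw [← hpp a, h, hpp b]
  have hnonempty : Nonempty V := hconn.nonempty
  set a0 := Classical.arbitrary V with ha0
  set q1 := tri a0 with hq1
  set q2 := tri (p a0) with hq2
  have hne0 : q1 ≠ q2 := by
    intro h
    have hx := hself (p a0)
    rw [← hq2, ← h, hq1] at hx
    exact hp_notin a0 hx
  have hmemq1 : ∀ v, v ∈ q1 → tri v = q1 := fun v hv => hmem a0 v hv
  have hmemq2 : ∀ v, v ∈ q2 → tri v = q2 := fun v hv => hmem (p a0) v hv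
  have hsep : ∀ x, x ∈ q1 → x ∈ q2 → False := by
    intro x h1 h2
    exact hne0 ((hmemq1 x h1).symm.trans (hmemq2 x h2))
  have hq12disj : Disjoint q1 q2 := Set.disjoint_left.2 (fun {a} ha hb => hsep a ha hb)
  have hq12card : (q1 ∪ q2).ncard = 6 := by
    rw [Set.ncard_union_eq hq12disj (Set.toFinite _) (Set.toFinite _)]
    rw [hq1, hq2, hncard_tri, hncard_tri]
  have hcard_ge6 : 6 ≤ Fintype.card V := by
    calc 6 = (q1 ∪ q2).ncard := hq12card.symm
      _ ≤ (Set.univ : Set V).ncard := Set.ncard_le_ncard (Set.subset_univ _) (Set.toFinite _)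
      _ = Fintype.card V := by rw [Set.ncard_univ, Nat.card_eq_fintype_card]
  have hstep : ∀ (T : Set V), ForcingClosed G T → ∀ v, tri v ⊆ T → p v ∈ T := by
    intro T hT v hsub
    refine hT v (hsub (hself v)) (p v) (hpadj v) ?_
    intro u hu hunot
    rcases (hAdjIff v u).1 hu with rfl | rfl | rfl
    · exact absurd (hsub (hc1m v)) hunot
    · exact absurd (hsub (hc2m v)) hunot
    · rfl
  by_cases hU : q1 ∪ q2 = Set.univ
  · -- the 6-vertex case: G is the prism
    have hcard6 : Fintype.card V = 6 := by
      rw [← hq12card, hU, Set.ncard_univ, Nat.card_eq_fintype_card]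
    have hq2port : ∀ x, x ∈ q1 → p x ∈ q2 := by
      intro x hx
      have h1 : p x ∉ q1 := fun h => hp_notin x (by rw [hmemq1 x hx]; exact h)
      have h2 : p x ∈ q1 ∪ q2 := hU ▸ Set.mem_univ (p x)
      rcases h2 with h | h
      · exact absurd h h1
      · exact h
    have hq1port : ∀ x, x ∈ q2 → p x ∈ q1 := by
      intro x hx
      have h1 : p x ∉ q2 := fun h => hp_notin x (by rw [hmemq2 x hx]; exact h)
      have h2 : p x ∈ q1 ∪ q2 := hU ▸ Set.mem_univ (p x)
      rcases h2 with h | h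
      · exact h
      · exact absurd h h1
    have hFt : totalForcingNumber G = 3 := by
      have hmem3 : (3 : ℕ) ∈ {n : ℕ | ∃ S : Set V, IsTotalForcingSet G S ∧ S.ncard = n} := by
        refine ⟨q1, ⟨?_, ?_⟩, by rw [hq1, hncard_tri]⟩
        · -- forcing
          intro T hsub hcl v
          have key : ∀ x, x ∈ q1 → p x ∈ T := by
            intro x hx
            exact hstep T hcl x (by rw [hmemq1 x hx]; exact hsub)
          have hv := hU ▸ Set.mem_univ v
          rcases hv with hv | hv
          · exact hsub hv
          · have h1 := key (p v) (hq1port v hv)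
            rwa [hpp v] at h1
        · -- total
          intro v hv
          have h1 : ((q1 : Set V) \ {v}).Nonempty := by
            rw [Set.nonempty_iff_ne_empty]
            intro hemp
            have h2 := Set.ncard_diff_singleton_of_mem hv
            rw [hemp] at h2
            rw [hq1, hncard_tri] at h2
            simp at h2
          obtain ⟨w, hw, hwv⟩ := h1
          exact ⟨w, hw, htri_adj a0 v w hv hw (fun h => hwv (h ▸ rfl))⟩
      apply le_antisymm
      · exact Nat.sInf_le hmem3
      · apply le_csInf ⟨3, hmem3⟩
        rintro b ⟨S, ⟨hSf, _⟩, rfl⟩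
        exact forcing_ncard_ge hcubic (by omega) hSf
    have hiso : Nonempty (G ≃g prism) := by
      have ha0q1 : a0 ∈ q1 := by rw [hq1]; exact hself a0
      have hb1q1 : c1 a0 ∈ q1 := by rw [hq1]; exact hc1m a0
      have hb2q1 : c2 a0 ∈ q1 := by rw [hq1]; exact hc2m a0
      have hpa0q2 : p a0 ∈ q2 := hq2port a0 ha0q1
      have hpb1q2 : p (c1 a0) ∈ q2 := hq2port _ hb1q1
      have hpb2q2 : p (c2 a0) ∈ q2 := hq2port _ hb2q1
      have d1 := (hdist a0).1
      have d2 := (hdist a0).2.1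
      have d3 := (hdist a0).2.2
      have dp1 : p a0 ≠ p (c1 a0) := fun h => d1 (hpinj h)
      have dp2 : p a0 ≠ p (c2 a0) := fun h => d2 (hpinj h)
      have dp3 : p (c1 a0) ≠ p (c2 a0) := fun h => d3 (hpinj h)
      have hirr : ∀ z : V, ¬G.Adj z z := fun z h => G.irrefl h
      have hcross : ∀ u w, u ∈ q1 → w ∈ q2 → w ≠ p u → ¬G.Adj u w := by
        intro u w hu hw hne h
        rcases (hAdjIff u w).1 h with rfl | rfl | rfl
        · exact hsep (c1 u) (by rw [← hmemq1 u hu]; exact hc1m u) hw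
        · exact hsep (c2 u) (by rw [← hmemq1 u hu]; exact hc2m u) hw
        · exact hne rfl
      have hcross2 : ∀ u w, u ∈ q1 → w ∈ q2 → w ≠ p u → ¬G.Adj w u :=
        fun u w hu hw hne h => hcross u w hu hw hne h.symm
      -- positive adjacencies
      have p1 : G.Adj a0 (c1 a0) := hadj_c1 a0
      have p2 : G.Adj (c1 a0) a0 := p1.symm
      have p3 : G.Adj a0 (c2 a0) := hadj_c2 a0
      have p4 : G.Adj (c2 a0) a0 := p3.symm
      have p5 : G.Adj (c1 a0) (c2 a0) := htri_adj a0 _ _ (hc1m a0) (hc2m a0) d3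
      have p6 : G.Adj (c2 a0) (c1 a0) := p5.symm
      have mq0 : p a0 ∈ tri (p a0) := hself (p a0)
      have mq1 : p (c1 a0) ∈ tri (p a0) := by rw [← hq2]; exact hpb1q2
      have mq2 : p (c2 a0) ∈ tri (p a0) := by rw [← hq2]; exact hpb2q2
      have p7 : G.Adj (p a0) (p (c1 a0)) := htri_adj (p a0) _ _ mq0 mq1 dp1
      have p8 : G.Adj (p (c1 a0)) (p a0) := p7.symm
      have p9 : G.Adj (p a0) (p (c2 a0)) := htri_adj (p a0) _ _ mq0 mq2 dp2
      have p10 : G.Adj (p (c2 a0)) (p a0) := p9.symm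
      have p11 : G.Adj (p (c1 a0)) (p (c2 a0)) := htri_adj (p a0) _ _ mq1 mq2 dp3
      have p12 : G.Adj (p (c2 a0)) (p (c1 a0)) := p11.symm
      have p13 : G.Adj a0 (p a0) := hpadj a0
      have p14 : G.Adj (p a0) a0 := p13.symm
      have p15 : G.Adj (c1 a0) (p (c1 a0)) := hpadj (c1 a0)
      have p16 : G.Adj (p (c1 a0)) (c1 a0) := p15.symm
      have p17 : G.Adj (c2 a0) (p (c2 a0)) := hpadj (c2 a0)
      have p18 : G.Adj (p (c2 a0)) (c2 a0) := p17.symm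
      -- negative adjacencies across the matching
      have n1 : ¬G.Adj a0 (p (c1 a0)) := hcross _ _ ha0q1 hpb1q2 (Ne.symm dp1)
      have n2 : ¬G.Adj a0 (p (c2 a0)) := hcross _ _ ha0q1 hpb2q2 (Ne.symm dp2)
      have n3 : ¬G.Adj (c1 a0) (p a0) := hcross _ _ hb1q1 hpa0q2 dp1
      have n4 : ¬G.Adj (c1 a0) (p (c2 a0)) := hcross _ _ hb1q1 hpb2q2 (Ne.symm dp3)
      have n5 : ¬G.Adj (c2 a0) (p a0) := hcross _ _ hb2q1 hpa0q2 dp2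
      have n6 : ¬G.Adj (c2 a0) (p (c1 a0)) := hcross _ _ hb2q1 hpb1q2 dp3
      have n7 : ¬G.Adj (p (c1 a0)) a0 := hcross2 _ _ ha0q1 hpb1q2 (Ne.symm dp1)
      have n8 : ¬G.Adj (p (c2 a0)) a0 := hcross2 _ _ ha0q1 hpb2q2 (Ne.symm dp2)
      have n9 : ¬G.Adj (p a0) (c1 a0) := hcross2 _ _ hb1q1 hpa0q2 dp1
      have n10 : ¬G.Adj (p (c2 a0)) (c1 a0) := hcross2 _ _ hb1q1 hpb2q2 (Ne.symm dp3)
      have n11 : ¬G.Adj (p a0) (c2 a0) := hcross2 _ _ hb2q1 hpa0q2 dp2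
      have n12 : ¬G.Adj (p (c1 a0)) (c2 a0) := hcross2 _ _ hb2q1 hpb1q2 dp3
      have hcards : Fintype.card (Fin 3 × Fin 2) = Fintype.card V := by
        rw [hcard6]
        simp
      set ψ : Fin 3 × Fin 2 → V := fun x =>
        if x.2 = 0 then ![a0, c1 a0, c2 a0] x.1 else ![p a0, p (c1 a0), p (c2 a0)] x.1 with hψ
      have hq2eq : tri (p a0) = {p a0, p (c1 a0), p (c2 a0)} :=
        htri_eq3 (p a0) _ _ _ mq0 mq1 mq2 dp1 dp2 dp3
      have hsurj : Function.Surjective ψ := by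
        intro v
        have hv : v ∈ q1 ∪ q2 := by rw [hU]; exact Set.mem_univ v
        rcases hv with hv | hv
        · rw [hq1] at hv
          rcases hv with h | h | h
          · exact ⟨(0, 0), by simp [hψ]; exact h.symm⟩
          · exact ⟨(1, 0), by simp [hψ]; exact h.symm⟩
          · exact ⟨(2, 0), by simp [hψ]; exact h.symm⟩
        · rw [hq2, hq2eq] at hv
          rcases hv with h | h | h
          · exact ⟨(0, 1), by simp [hψ]; exact h.symm⟩
          · exact ⟨(1, 1), by simp [hψ]; exact h.symm⟩
          · exact ⟨(2, 1), by simp [hψ]; exact h.symm⟩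
      have hbij : Function.Bijective ψ :=
        (Fintype.bijective_iff_surjective_and_card ψ).2 ⟨hsurj, hcards⟩
      have key : ∀ x y : Fin 3 × Fin 2, G.Adj (ψ x) (ψ y) ↔ prism.Adj x y := by
        intro x y
        rw [prism_adj_iff]
        rcases x with ⟨i, j⟩
        rcases y with ⟨k, l⟩
        fin_cases i <;> fin_cases j <;> fin_cases k <;> fin_cases l <;>
          simp only [hψ, Matrix.cons_val_zero, Matrix.cons_val_one, Matrix.head_cons,
            Matrix.cons_val_two, Matrix.tail_cons, if_true, if_false] <;>
          norm_num <;>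
          first
            | assumption
            | exact hirr _
            | (refine iff_of_true ?_ (by decide); assumption)
            | (refine iff_of_false ?_ (by decide); first | assumption | exact hirr _)
      exact ⟨SimpleGraph.Iso.symm
        (⟨Equiv.ofBijective ψ hbij, fun {a b} => key a b⟩ : prism ≃g G)⟩

    rw [hFt, hcard6]
    exact iff_of_true rfl hiso
  · -- at least four triangles
    obtain ⟨v0, hv0⟩ : ∃ v0, v0 ∉ q1 ∪ q2 := by
      by_contra hcon
      push_neg at hcon
      exact hU (Set.eq_univ_of_forall hcon)
    have hbound : 2 * totalForcingNumber G ≤ Fintype.card V - 2 := by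
      obtain ⟨ρ, hρiff, hρ0, hρ1, hρback⟩ := exists_rho hconn c1 c2 p tri htri hN hmem hpp a0
        (by rw [← hq1, ← hq2]; exact hne0)
      set B : Set V := {v | ρ (p v) < ρ v} with hBdef
      have hBmem : ∀ v, v ∈ B ↔ ρ (p v) < ρ v := fun v => Iff.rfl
      have hρne : ∀ v, ρ (p v) ≠ ρ v := by
        intro v h
        have h2 := (hρiff (p v) v).1 h
        exact hp_notin v (by rw [← h2]; exact hself (p v))
      have hBiff : ∀ v, v ∉ B → p v ∈ B := by
        intro v h
        rw [hBmem] at h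
        rw [hBmem, hpp]
        have := hρne v
        omega
      have hBcompl : Bᶜ = p '' B := by
        ext x
        constructor
        · intro hx
          exact ⟨p x, hBiff x hx, hpp x⟩
        · rintro ⟨b, hb, rfl⟩
          intro hpb
          rw [hBmem, hpp] at hpb
          rw [hBmem] at hb
          omega
      have hcompl_total : B.ncard + Bᶜ.ncard = Fintype.card V := by
        rw [← Nat.card_eq_fintype_card]
        exact Set.ncard_add_ncard_compl B
      have hBcard : 2 * B.ncard = Fintype.card V := by
        have h2 : Bᶜ.ncard = B.ncard := by
          rw [hBcompl, Set.ncard_image_of_injective _ hpinj]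
        omega
      have hBq1 : ∀ v, v ∈ q1 → v ∉ B := by
        intro v hv hvB
        have h0 : ρ v = 0 := (hρ0 v).2 (by rw [hmemq1 v hv, hq1])
        rw [hBmem] at hvB
        omega
      set m := (B ∩ q2).ncard with hm
      have hpa0B : p a0 ∈ B ∩ q2 := by
        constructor
        · rw [hBmem, hpp]
          have h0 : ρ a0 = 0 := (hρ0 a0).2 rfl
          have h1 : ρ (p a0) = 1 := (hρ1 (p a0)).2 rfl
          omega
        · rw [hq2]; exact hself (p a0)
      have hm1 : 1 ≤ m := (Set.ncard_pos (Set.toFinite _)).2 ⟨p a0, hpa0B⟩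
      have hq2portB : ∀ v, v ∈ B ∩ q2 → p v ∈ q1 := by
        rintro v ⟨hvB, hvq⟩
        have h1 : ρ v = 1 := (hρ1 v).2 (by rw [hmemq2 v hvq, hq2])
        rw [hBmem] at hvB
        have h2 : ρ (p v) = 0 := by omega
        have h3 := (hρ0 (p v)).1 h2
        rw [hq1, ← h3]
        exact hself (p v)
      have hmle : m ≤ 3 := by
        calc m ≤ q2.ncard := Set.ncard_le_ncard Set.inter_subset_right (Set.toFinite _)
          _ = 3 := by rw [hq2, hncard_tri]
      have hm3 : m ≠ 3 := by
        intro h3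
        have hBq2 : B ∩ q2 = q2 := by
          apply Set.eq_of_subset_of_ncard_le Set.inter_subset_right
          rw [← hm, h3, hq2, hncard_tri]
        have hallport : ∀ v ∈ q2, p v ∈ q1 := by
          intro v hv
          exact hq2portB v (by rw [hBq2]; exact hv)
        have himg : p '' q2 = q1 := by
          apply Set.eq_of_subset_of_ncard_le
          · rintro x ⟨u, hu, rfl⟩
            exact hallport u hu
          · rw [Set.ncard_image_of_injective _ hpinj, hq1, hq2, hncard_tri, hncard_tri]
          · exact Set.toFinite _
        have hKcl : ∀ v ∈ q1 ∪ q2, ∀ w, G.Adj v w → w ∈ q1 ∪ q2 := by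
          intro v hv w hadj
          rcases (hAdjIff v w).1 hadj with rfl | rfl | rfl
          · rcases hv with hv | hv
            · exact Or.inl (by rw [← hmemq1 v hv]; exact hc1m v)
            · exact Or.inr (by rw [← hmemq2 v hv]; exact hc1m v)
          · rcases hv with hv | hv
            · exact Or.inl (by rw [← hmemq1 v hv]; exact hc2m v)
            · exact Or.inr (by rw [← hmemq2 v hv]; exact hc2m v)
          · rcases hv with hv | hv
            · have hvimg : v ∈ p '' q2 := by rw [himg]; exact hv
              obtain ⟨u, hu, rfl⟩ := hvimg
              rw [hpp]
              exact Or.inr hu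
            · exact Or.inl (hallport v hv)
        exact hv0 (reach_all hconn (Or.inl (show a0 ∈ q1 by rw [hq1]; exact hself a0)) hKcl v0)
      -- the cheap vertices
      set D : Set V := {v | v ∉ q1 ∪ q2 ∧ v ∉ B ∧ (B ∩ tri v).ncard = 1} with hDdef
      have hport : ∀ (T : Set V), ForcingClosed G T → ∀ v, (∀ w, ρ w < ρ v → w ∈ T) →
          ∀ u, u ∈ B ∩ tri v → u ∈ T := by
        rintro T hcl v IH u ⟨huB, hut⟩
        have h1 : ρ u = ρ v := (hρiff u v).2 (hmem v u hut)
        rw [hBmem] at huB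
        have h3 : tri (p u) ⊆ T := by
          intro w hw
          apply IH
          have h4 : ρ w = ρ (p u) := (hρiff w (p u)).2 (hmem (p u) w hw)
          omega
        have h4 := hstep T hcl (p u) h3
        rwa [hpp] at h4
      have hDtot : ∀ v ∈ D, ∃ w ∈ D, G.Adj v w := by
        intro v hv
        obtain ⟨hvq, hvB, hone⟩ := hv
        obtain ⟨a, ha⟩ := Set.ncard_eq_one.1 hone
        have haB : a ∈ B ∩ tri v := by rw [ha]; exact rfl
        have hsub2 : ({v, a} : Set V) ⊆ tri v := by
          intro x hx'
          rcases hx' with h | h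
          · rw [h]; exact hself v
          · rw [h]; exact haB.2
        have hvna : v ≠ a := fun h => hvB (h ▸ haB.1)
        have h2 : (tri v \ {v, a}).ncard = 1 := by
          rw [Set.ncard_diff hsub2 (Set.toFinite _), hncard_tri, Set.ncard_pair hvna]
        obtain ⟨w, hwmem⟩ := Set.ncard_eq_one.1 h2
        have hw : w ∈ tri v ∧ w ∉ ({v, a} : Set V) := by rw [← Set.mem_diff, hwmem]; exact rfl
        have hwv : w ≠ v := fun h => hw.2 (Or.inl h)
        have hwa : w ≠ a := fun h => hw.2 (Or.inr h)
        refine ⟨w, ⟨?_, ?_, ?_⟩, htri_adj v v w (hself v) hw.1 (Ne.symm hwv)⟩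
        · intro hwq
          apply hvq
          rcases hwq with h | h
          · exact Or.inl (by rw [← hmemq1 w h, hmem v w hw.1]; exact hself v)
          · exact Or.inr (by rw [← hmemq2 w h, hmem v w hw.1]; exact hself v)
        · intro hwB
          exact hwa (by have hx : w ∈ B ∩ tri v := ⟨hwB, hw.1⟩; rw [ha] at hx; exact hx)
        · rw [hmem v w hw.1]; exact hone
      -- generic forcing argument given handlers for the two root triangles
      have hmain : ∀ (R : Set V),
          (∀ T : Set V, R ∪ D ⊆ T → ForcingClosed G T → q1 ⊆ T) →
          (∀ T : Set V, R ∪ D ⊆ T → ForcingClosed G T → (∀ w, ρ w < 1 → w ∈ T) → q2 ⊆ T) →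
          IsForcingSet G (R ∪ D) := by
        intro R hroot1 hroot2 T hST hcl
        have strong : ∀ k v, ρ v < k → v ∈ T := by
          intro k
          induction k with
          | zero => exact fun v h => absurd h (Nat.not_lt_zero _)
          | succ k ih =>
            intro v hv
            by_cases hvk : ρ v < k
            · exact ih v hvk
            have hρv : ρ v = k := by omega
            have IH : ∀ w, ρ w < ρ v → w ∈ T := fun w hw => ih w (by omega)
            by_cases h1 : tri v = tri a0
            · exact hroot1 T hST hcl (by rw [hq1, ← h1]; exact hself v)
            by_cases hq2c : tri v = tri (p a0)
            · have hρ1v : ρ v = 1 := (hρ1 v).2 hq2c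
              exact hroot2 T hST hcl (fun w hw => IH w (by omega))
                (by rw [hq2, ← hq2c]; exact hself v)
            have hρ2 : 2 ≤ ρ v := by
              have e0 : ρ v ≠ 0 := fun h => h1 ((hρ0 v).1 h)
              have e1 : ρ v ≠ 1 := fun h => hq2c ((hρ1 v).1 h)
              omega
            obtain ⟨w, hw, hpw⟩ := hρback v hρ2
            have hwB : w ∈ B := hpw
            by_cases hvB : v ∈ B
            · exact hport T hcl v IH v ⟨hvB, hself v⟩
            by_cases hcard1 : (B ∩ tri v).ncard = 1
            · refine hST (Or.inr ⟨?_, hvB, hcard1⟩)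
              rintro (h | h)
              · exact h1 (by rw [hmemq1 v h, hq1])
              · exact hq2c (by rw [hmemq2 v h, hq2])
            · have h2le : 2 ≤ (B ∩ tri v).ncard := by
                have hpos : 0 < (B ∩ tri v).ncard :=
                  (Set.ncard_pos (Set.toFinite _)).2 ⟨w, hwB, hw⟩
                omega
              obtain ⟨x, y, hx, hy, hxy⟩ :=
                (Set.one_lt_ncard_iff (s := B ∩ tri v) (Set.toFinite _)).1 (by omega)
              have hxT := hport T hcl v IH x hx
              have hyT := hport T hcl v IH y hy
              have hvx : v ≠ x := fun h => hvB (h ▸ hx.1)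
              have hvy : v ≠ y := fun h => hvB (h ▸ hy.1)
              have hρx : ρ x = ρ v := (hρiff x v).2 (hmem v x hx.2)
              have hpxT : p x ∈ T := by
                apply IH
                have hlt : ρ (p x) < ρ x := hx.1
                omega
              have htv : tri v = {x, y, v} :=
                htri_eq3 v x y v hx.2 hy.2 (hself v) hxy (Ne.symm hvx) (Ne.symm hvy)
              refine hcl x hxT v (htri_adj v x v hx.2 (hself v) (Ne.symm hvx)) ?_
              intro z hz hzT
              rcases (hAdjIff x z).1 hz with rfl | rfl | rfl
              · have hc : c1 x ∈ tri v := by rw [← hmem v x hx.2]; exact hc1m x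
                rw [htv] at hc
                rcases hc with h | h | h
                · exact absurd h.symm (hdist x).1
                · exact absurd (show c1 x ∈ T by rw [h]; exact hyT) hzT
                · exact h
              · have hc : c2 x ∈ tri v := by rw [← hmem v x hx.2]; exact hc2m x
                rw [htv] at hc
                rcases hc with h | h | h
                · exact absurd h.symm (hdist x).2.1
                · exact absurd (show c2 x ∈ T by rw [h]; exact hyT) hzT
                · exact h
              · exact absurd hpxT hzT
        exact fun v => strong (ρ v + 1) v (Nat.lt_succ_self _)
      -- common counting facts
      have hsplitU : (B ∩ (q1 ∪ q2)).ncard + ((q1 ∪ q2) \ B).ncard = 6 := by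
        have h := Set.ncard_inter_add_ncard_diff_eq_ncard (q1 ∪ q2) B (Set.toFinite _)
        rw [hq12card] at h
        rw [Set.inter_comm] at h
        exact h
      have hBU : (B ∩ (q1 ∪ q2)).ncard = m := by
        have he : B ∩ (q1 ∪ q2) = B ∩ q2 := by
          rw [Set.inter_union_distrib_left]
          have h0 : B ∩ q1 = ∅ :=
            Set.eq_empty_iff_forall_notMem.2 fun x ⟨hxB, hxq⟩ => hBq1 x hxq hxB
          rw [h0, Set.empty_union]
        rw [he, hm]
      have hcomplsplit : (Bᶜ ∩ (q1 ∪ q2)).ncard + (Bᶜ \ (q1 ∪ q2)).ncard = Bᶜ.ncard :=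
        Set.ncard_inter_add_ncard_diff_eq_ncard Bᶜ (q1 ∪ q2) (Set.toFinite _)
      have hc_inter : (Bᶜ ∩ (q1 ∪ q2)).ncard = ((q1 ∪ q2) \ B).ncard := by
        rw [Set.diff_eq, Set.inter_comm]
      have hDcard : D.ncard ≤ (Bᶜ \ (q1 ∪ q2)).ncard := by
        apply Set.ncard_le_ncard _ (Set.toFinite _)
        exact fun v hv => ⟨hv.2.1, hv.1⟩
      -- now split on m
      have hm12 : m = 1 ∨ m = 2 := by omega
      rcases hm12 with hmv | hmv
      · -- m = 1 : four-element root gadget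
        set R : Set V := {a0, c1 a0, p a0, c1 (p a0)} with hRdef
        have ha0R : a0 ∈ R := Or.inl rfl
        have hc1R : c1 a0 ∈ R := Or.inr (Or.inl rfl)
        have hpR : p a0 ∈ R := Or.inr (Or.inr (Or.inl rfl))
        have hc1pR : c1 (p a0) ∈ R := Or.inr (Or.inr (Or.inr rfl))
        have hforce : IsForcingSet G (R ∪ D) := by
          apply hmain
          · intro T hST hcl u hu
            have ha0T : a0 ∈ T := hST (Or.inl ha0R)
            have hc1T : c1 a0 ∈ T := hST (Or.inl hc1R)
            have hpa0T : p a0 ∈ T := hST (Or.inl hpR)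
            have hc2T : c2 a0 ∈ T := by
              refine hcl a0 ha0T (c2 a0) (hadj_c2 a0) ?_
              intro z hz hzT
              rcases (hAdjIff a0 z).1 hz with rfl | rfl | rfl
              · exact absurd hc1T hzT
              · rfl
              · exact absurd hpa0T hzT
            rw [hq1] at hu
            rcases hu with rfl | rfl | rfl
            · exact ha0T
            · exact hc1T
            · exact hc2T
          · intro T hST hcl _ u hu
            have hpa0T : p a0 ∈ T := hST (Or.inl hpR)
            have hc1T : c1 (p a0) ∈ T := hST (Or.inl hc1pR)
            have ha0T : a0 ∈ T := hST (Or.inl ha0R)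
            have hc2T : c2 (p a0) ∈ T := by
              refine hcl (p a0) hpa0T (c2 (p a0)) (hadj_c2 (p a0)) ?_
              intro z hz hzT
              rcases (hAdjIff (p a0) z).1 hz with rfl | rfl | rfl
              · exact absurd hc1T hzT
              · rfl
              · exact absurd (show p (p a0) ∈ T by rw [hpp]; exact ha0T) hzT
            rw [hq2] at hu
            rcases hu with rfl | rfl | rfl
            · exact hpa0T
            · exact hc1T
            · exact hc2T
        have htotal : ∀ v ∈ R ∪ D, ∃ w ∈ R ∪ D, G.Adj v w := by
          rintro v (hv | hv)
          · rcases hv with h | h | h | h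
            · exact ⟨c1 a0, Or.inl hc1R, by rw [h]; exact hadj_c1 a0⟩
            · exact ⟨a0, Or.inl ha0R, by rw [h]; exact (hadj_c1 a0).symm⟩
            · exact ⟨c1 (p a0), Or.inl hc1pR, by rw [h]; exact hadj_c1 (p a0)⟩
            · exact ⟨p a0, Or.inl hpR, by rw [h]; exact (hadj_c1 (p a0)).symm⟩
          · obtain ⟨w, hw, hadj⟩ := hDtot v hv
            exact ⟨w, Or.inr hw, hadj⟩
        have hFtle : totalForcingNumber G ≤ (R ∪ D).ncard :=
          Nat.sInf_le ⟨R ∪ D, ⟨hforce, htotal⟩, rfl⟩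
        have hRcard : R.ncard ≤ 4 := by
          calc R.ncard ≤ ({c1 a0, p a0, c1 (p a0)} : Set V).ncard + 1 := Set.ncard_insert_le _ _
            _ ≤ (({p a0, c1 (p a0)} : Set V).ncard + 1) + 1 := by
                have := Set.ncard_insert_le (c1 a0) ({p a0, c1 (p a0)} : Set V)
                omega
            _ ≤ ((({c1 (p a0)} : Set V).ncard + 1) + 1) + 1 := by
                have := Set.ncard_insert_le (p a0) ({c1 (p a0)} : Set V)
                omega
            _ ≤ 4 := by rw [Set.ncard_singleton]
        have hScard : (R ∪ D).ncard ≤ R.ncard + D.ncard := Set.ncard_union_le _ _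
        omega
      · -- m = 2 : three-element root gadget
        obtain ⟨x, y, hx, hy, hxy⟩ := (Set.one_lt_ncard_iff (Set.toFinite _)).1
          (show 1 < (B ∩ q2).ncard by omega)
        have hpx1 : p x ∈ q1 := hq2portB x hx
        have hpy1 : p y ∈ q1 := hq2portB y hy
        have hpxy : p x ≠ p y := fun h => hxy (hpinj h)
        set R : Set V := {p x, p y, x} with hRdef
        have hpxR : p x ∈ R := Or.inl rfl
        have hpyR : p y ∈ R := Or.inr (Or.inl rfl)
        have hxR : x ∈ R := Or.inr (Or.inr rfl)
        have hρq1 : ∀ u, u ∈ q1 → ρ u = 0 := fun u hu => (hρ0 u).2 (by rw [hmemq1 u hu, hq1])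
        have hforce : IsForcingSet G (R ∪ D) := by
          apply hmain
          · -- q1 ⊆ T
            intro T hST hcl u hu
            have hpxT : p x ∈ T := hST (Or.inl hpxR)
            have hpyT : p y ∈ T := hST (Or.inl hpyR)
            have hxT : x ∈ T := hST (Or.inl hxR)
            by_cases hu1 : u = p x
            · rw [hu1]; exact hpxT
            by_cases hu2 : u = p y
            · rw [hu2]; exact hpyT
            have hq1eq : tri a0 = {p x, p y, u} := by
              refine htri_eq3 a0 (p x) (p y) u ?_ ?_ ?_ hpxy (fun h => hu1 h.symm)
                (fun h => hu2 h.symm)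
              · rw [← hq1]; exact hpx1
              · rw [← hq1]; exact hpy1
              · rw [← hq1]; exact hu
            refine hcl (p x) hpxT u
              (htri_adj a0 (p x) u (by rw [← hq1]; exact hpx1) (by rw [← hq1]; exact hu)
                (fun h => hu1 h.symm)) ?_
            intro z hz hzT
            rcases (hAdjIff (p x) z).1 hz with rfl | rfl | rfl
            · have hc : c1 (p x) ∈ tri a0 := by
                rw [← hmem a0 (p x) (by rw [← hq1]; exact hpx1)]
                exact hc1m (p x)
              rw [hq1eq] at hc
              rcases hc with h | h | h
              · exact absurd h.symm (hdist (p x)).1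
              · exact absurd (show c1 (p x) ∈ T by rw [h]; exact hpyT) hzT
              · exact h
            · have hc : c2 (p x) ∈ tri a0 := by
                rw [← hmem a0 (p x) (by rw [← hq1]; exact hpx1)]
                exact hc2m (p x)
              rw [hq1eq] at hc
              rcases hc with h | h | h
              · exact absurd h.symm (hdist (p x)).2.1
              · exact absurd (show c2 (p x) ∈ T by rw [h]; exact hpyT) hzT
              · exact h
            · exact absurd (show p (p x) ∈ T by rw [hpp]; exact hxT) hzT
          · -- q2 ⊆ T
            intro T hST hcl IH1 u hu
            have hq1T : ∀ w, w ∈ q1 → w ∈ T := by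
              intro w hw
              apply IH1
              rw [hρq1 w hw]
              omega
            have hxT : x ∈ T := hST (Or.inl hxR)
            have hyT : y ∈ T := by
              refine hcl (p y) (hq1T (p y) hpy1) y
                (by have := hpadj (p y); rwa [hpp] at this) ?_
              intro z hz hzT
              rcases (hAdjIff (p y) z).1 hz with rfl | rfl | rfl
              · exact absurd (hq1T (c1 (p y)) (by
                  rw [← hmemq1 (p y) hpy1]; exact hc1m (p y))) hzT
              · exact absurd (hq1T (c2 (p y)) (by
                  rw [← hmemq1 (p y) hpy1]; exact hc2m (p y))) hzT
              · exact hpp y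
            by_cases hu1 : u = x
            · rw [hu1]; exact hxT
            by_cases hu2 : u = y
            · rw [hu2]; exact hyT
            have hq2eq : tri (p a0) = {x, y, u} := by
              refine htri_eq3 (p a0) x y u ?_ ?_ ?_ hxy (fun h => hu1 h.symm)
                (fun h => hu2 h.symm)
              · rw [← hq2]; exact hx.2
              · rw [← hq2]; exact hy.2
              · rw [← hq2]; exact hu
            refine hcl x hxT u
              (htri_adj (p a0) x u (by rw [← hq2]; exact hx.2) (by rw [← hq2]; exact hu)
                (fun h => hu1 h.symm)) ?_
            intro z hz hzT
            rcases (hAdjIff x z).1 hz with rfl | rfl | rfl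
            · have hc : c1 x ∈ tri (p a0) := by
                rw [← hmem (p a0) x (by rw [← hq2]; exact hx.2)]
                exact hc1m x
              rw [hq2eq] at hc
              rcases hc with h | h | h
              · exact absurd h.symm (hdist x).1
              · exact absurd (show c1 x ∈ T by rw [h]; exact hyT) hzT
              · exact h
            · have hc : c2 x ∈ tri (p a0) := by
                rw [← hmem (p a0) x (by rw [← hq2]; exact hx.2)]
                exact hc2m x
              rw [hq2eq] at hc
              rcases hc with h | h | h
              · exact absurd h.symm (hdist x).2.1
              · exact absurd (show c2 x ∈ T by rw [h]; exact hyT) hzT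
              · exact h
            · exact absurd (hq1T (p x) hpx1) hzT
        have htotal : ∀ v ∈ R ∪ D, ∃ w ∈ R ∪ D, G.Adj v w := by
          rintro v (hv | hv)
          · rcases hv with h | h | h
            · exact ⟨p y, Or.inl hpyR, by
                rw [h]
                exact htri_adj a0 (p x) (p y) (by rw [← hq1]; exact hpx1)
                  (by rw [← hq1]; exact hpy1) hpxy⟩
            · exact ⟨p x, Or.inl hpxR, by
                rw [h]
                exact htri_adj a0 (p y) (p x) (by rw [← hq1]; exact hpy1)
                  (by rw [← hq1]; exact hpx1) (Ne.symm hpxy)⟩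
            · exact ⟨p x, Or.inl hpxR, by rw [h]; exact hpadj x⟩
          · obtain ⟨w, hw, hadj⟩ := hDtot v hv
            exact ⟨w, Or.inr hw, hadj⟩
        have hFtle : totalForcingNumber G ≤ (R ∪ D).ncard :=
          Nat.sInf_le ⟨R ∪ D, ⟨hforce, htotal⟩, rfl⟩
        have hRcard : R.ncard ≤ 3 := by
          calc R.ncard ≤ ({p y, x} : Set V).ncard + 1 := Set.ncard_insert_le _ _
            _ ≤ (({x} : Set V).ncard + 1) + 1 := by
                have := Set.ncard_insert_le (p y) ({x} : Set V)
                omega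
            _ ≤ 3 := by rw [Set.ncard_singleton]
        have hScard : (R ∪ D).ncard ≤ R.ncard + D.ncard := Set.ncard_union_le _ _
        omega

    constructor
    · intro h
      omega
    · rintro ⟨e⟩
      exfalso
      have hc6 : Fintype.card V = 6 := by
        rw [Fintype.card_congr e.toEquiv]
        simp
      apply hU
      apply Set.eq_of_subset_of_ncard_le (Set.subset_univ _)
      rw [Set.ncard_univ, Nat.card_eq_fintype_card, hc6, hq12card]
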